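/- arXiv:1211.3227 — 5 statements merged into one kernel-verified Lean document; each statement's English description precedes it below -/
import Mathlib

section
/- Let γ : I → ℝ^n be a self-contracted curve and let t ∈ I be a point at which γ is differentiable. Then ⟨γ′(t), γ(u) − γ(t)⟩ ≥ 0 for all u ∈ I with u > t. -/
open Set Metric RealInnerProductSpace

/-- A curve `γ : I → ℝⁿ` is *self-contracted* if for all `t₁ ≤ t₂ ≤ t₃` in `I`,
`‖γ t₁ - γ t₃‖ ≥ ‖γ t₂ - γ t₃‖`. -/
def SelfContracted {n : ℕ} (I : Set ℝ) (γ : ℝ → EuclideanSpace ℝ (Fin n)) : Prop :=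
  ∀ t₁ ∈ I, ∀ t₂ ∈ I, ∀ t₃ ∈ I, t₁ ≤ t₂ → t₂ ≤ t₃ →
    ‖γ t₂ - γ t₃‖ ≤ ‖γ t₁ - γ t₃‖

/-- If a self-contracted curve `γ : I → ℝⁿ` is differentiable at `t ∈ I`, with
derivative `v`, then `⟪v, γ(u) - γ(t)⟫ ≥ 0` for all `u ∈ I` with `u > t`. -/
theorem selfContracted_deriv_inner_nonneg {n : ℕ} (I : Set ℝ) (hI : I.OrdConnected)
    (γ : ℝ → EuclideanSpace ℝ (Fin n)) (hγ : SelfContracted I γ)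
    (t : ℝ) (ht : t ∈ I) (v : EuclideanSpace ℝ (Fin n))
    (hv : HasDerivWithinAt γ v I t) :
    ∀ u ∈ I, t < u → 0 ≤ ⟪v, γ u - γ t⟫ := by
  intro u hu htu
  have key : ∀ s ∈ Ioc t u, 0 ≤ ⟪γ s - γ t, γ u - γ t⟫ := by
    intro s hs
    have hsI : s ∈ I := hI.out ht hu ⟨hs.1.le, hs.2⟩
    have h : ‖γ s - γ u‖ ≤ ‖γ t - γ u‖ := hγ t ht s hsI u hu hs.1.le hs.2
    have e1 : γ s - γ u = (γ s - γ t) - (γ u - γ t) := by abel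
    have e2 : ‖γ t - γ u‖ = ‖γ u - γ t‖ := norm_sub_rev _ _
    rw [e1, e2] at h
    have hsq := norm_sub_sq_real (γ s - γ t) (γ u - γ t)
    nlinarith [sq_nonneg ‖γ s - γ t‖,
      norm_nonneg ((γ s - γ t) - (γ u - γ t)), norm_nonneg (γ u - γ t),
      mul_self_le_mul_self (norm_nonneg ((γ s - γ t) - (γ u - γ t))) h]
  have hslope : Filter.Tendsto (slope γ t) (nhdsWithin t (I \ {t})) (nhds v) :=
    hasDerivWithinAt_iff_tendsto_slope.mp hv
  have hsub : Ioc t u ⊆ I \ {t} := fun s hs =>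
    ⟨hI.out ht hu ⟨hs.1.le, hs.2⟩, (ne_of_gt hs.1)⟩
  have hslope' : Filter.Tendsto (slope γ t) (nhdsWithin t (Ioc t u)) (nhds v) :=
    hslope.mono_left (nhdsWithin_mono t hsub)
  have hten : Filter.Tendsto (fun s => ⟪slope γ t s, γ u - γ t⟫)
      (nhdsWithin t (Ioc t u)) (nhds ⟪v, γ u - γ t⟫) :=
    hslope'.inner tendsto_const_nhds
  have hne : (nhdsWithin t (Ioc t u)).NeBot := left_nhdsWithin_Ioc_neBot htu
  refine ge_of_tendsto hten ?_
  filter_upwards [self_mem_nhdsWithin] with s hs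
  have h1 : (0:ℝ) < (s - t)⁻¹ := inv_pos.mpr (sub_pos.mpr hs.1)
  have : slope γ t s = (s - t)⁻¹ • (γ s - γ t) := rfl
  rw [this, real_inner_smul_left]
  exact mul_nonneg h1.le (key s hs)
end

section
/- Let γ : I → ℝ^n be a Lipschitz curve, and define the reverse parametrization γ⁻ : I⁻ → ℝ^n on the opposite interval I⁻ = {−t : t ∈ I} by γ⁻(t) = γ(−t). Then γ is self-contracted if and only if γ⁻ is self-expanded. -/
open Set Metric RealInnerProductSpace MeasureTheory Filter Topology intervalIntegral

/-- A curve `γ : I → ℝⁿ` is *self-expanded* if it is Lipschitz on `I` and, at every point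
`t ∈ I` where it is differentiable (within `I`), `⟪γ'(t), γ(t) - γ(u)⟫ ≥ 0` for
all `u ∈ I` with `u ≤ t`. -/
def SelfExpanded {n : ℕ} (I : Set ℝ) (γ : ℝ → EuclideanSpace ℝ (Fin n)) : Prop :=
  (∃ K : NNReal, LipschitzOnWith K γ I) ∧
  ∀ t ∈ I, DifferentiableWithinAt ℝ γ I t →
    ∀ u ∈ I, u ≤ t → 0 ≤ ⟪derivWithin γ I t, γ t - γ u⟫

private lemma slope_tendsto_seq' {g : ℝ → ℝ} {y d : ℝ} (hd : HasDerivAt g d y) :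
    Tendsto (fun n : ℕ => (g (y + ((n : ℝ) + 1)⁻¹) - g y) * ((n : ℝ) + 1)) atTop (𝓝 d) := by
  have hslope := hasDerivAt_iff_tendsto_slope.mp hd
  have hn : Tendsto (fun n : ℕ => y + ((n : ℝ) + 1)⁻¹) atTop (𝓝[≠] y) := by
    apply tendsto_nhdsWithin_of_tendsto_nhds_of_eventually_within
    · simpa using tendsto_const_nhds.add
        ((tendsto_one_div_add_atTop_nhds_zero_nat (𝕜 := ℝ)).congr (fun n => one_div _))
    · filter_upwards with n
      have h1 : (0:ℝ) < ((n : ℝ) + 1)⁻¹ := by positivity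
      simp only [mem_compl_iff, mem_singleton_iff]
      intro h
      nlinarith
  have h2 := hslope.comp hn
  refine h2.congr fun n => ?_
  have h1 : (0:ℝ) < ((n : ℝ) + 1)⁻¹ := by positivity
  simp only [Function.comp, slope_def_field, add_sub_cancel_left, div_inv_eq_mul]

private lemma lipschitz_mono_of_ae_deriv_nonneg' {g : ℝ → ℝ} {C : NNReal} (hg : LipschitzWith C g)
    {a b : ℝ} (hab : a ≤ b)
    (h : ∀ᵐ x ∂(volume : Measure ℝ), x ∈ Set.Ioo a b →
      DifferentiableAt ℝ g x ∧ 0 ≤ deriv g x) : g a ≤ g b := by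
  rcases eq_or_lt_of_le hab with rfl | hab'
  · exact le_refl _
  have hgc : Continuous g := hg.continuous
  have hgi : ∀ c d : ℝ, IntervalIntegrable g volume c d := fun c d =>
    hgc.intervalIntegrable c d
  set F : ℕ → ℝ → ℝ := fun n x => (g (x + ((n : ℝ) + 1)⁻¹) - g x) * ((n : ℝ) + 1) with hF
  have key : ∀ n : ℕ, ∫ x in a..b, F n x =
      ((∫ x in b..(b + ((n : ℝ) + 1)⁻¹), g x) - ∫ x in a..(a + ((n : ℝ) + 1)⁻¹), g x)
        * ((n : ℝ) + 1) := by
    intro n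
    set c : ℝ := ((n : ℝ) + 1)⁻¹ with hc
    have h1 : ∫ x in a..b, (g (x + c) - g x) = (∫ x in (a+c)..(b+c), g x) - ∫ x in a..b, g x := by
      rw [intervalIntegral.integral_sub
        (by exact (hgc.comp (by continuity)).intervalIntegrable _ _) (hgi a b)]
      rw [intervalIntegral.integral_comp_add_right]
    have h2 : (∫ x in a..(a+c), g x) + ∫ x in (a+c)..(b+c), g x = ∫ x in a..(b+c), g x :=
      integral_add_adjacent_intervals (hgi _ _) (hgi _ _)
    have h3 : (∫ x in a..b, g x) + ∫ x in b..(b+c), g x = ∫ x in a..(b+c), g x :=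
      integral_add_adjacent_intervals (hgi _ _) (hgi _ _)
    have h4 : ∫ x in a..b, F n x = (∫ x in a..b, (g (x + c) - g x)) * ((n:ℝ)+1) := by
      rw [← intervalIntegral.integral_mul_const]
    rw [h4, h1]
    have heq : (∫ x in (a+c)..(b+c), g x) - ∫ x in a..b, g x
        = (∫ x in b..(b + c), g x) - ∫ x in a..(a + c), g x := by linarith
    rw [heq]
  have limy : ∀ y : ℝ, Tendsto (fun n : ℕ => (∫ x in y..(y + ((n : ℝ) + 1)⁻¹), g x)
      * ((n : ℝ) + 1)) atTop (𝓝 (g y)) := by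
    intro y
    have hΦ : HasDerivAt (fun t => ∫ x in y..t, g x) (g y) y :=
      intervalIntegral.integral_hasDerivAt_right (hgi y y)
        hgc.stronglyMeasurable.stronglyMeasurableAtFilter hgc.continuousAt
    have := slope_tendsto_seq' hΦ
    simpa using this
  have lim1 : Tendsto (fun n : ℕ => ∫ x in a..b, F n x) atTop (𝓝 (g b - g a)) := by
    have := (limy b).sub (limy a)
    refine this.congr fun n => ?_
    rw [key n]; ring
  have lim2 : Tendsto (fun n : ℕ => ∫ x in a..b, F n x) atTop
      (𝓝 (∫ x in Set.Ioc a b, deriv g x)) := by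
    have heq : ∀ n, ∫ x in a..b, F n x = ∫ x in Set.Ioc a b, F n x := fun n =>
      intervalIntegral.integral_of_le hab
    simp only [heq]
    apply tendsto_integral_of_dominated_convergence (fun _ => (C : ℝ))
    · intro n
      exact ((hgc.comp (by continuity)).sub hgc).mul continuous_const |>.aestronglyMeasurable
    · exact integrable_const _
    · intro n
      filter_upwards with x
      have h1 : (0:ℝ) < ((n : ℝ) + 1)⁻¹ := by positivity
      have hd := hg.dist_le_mul (x + ((n : ℝ) + 1)⁻¹) x
      rw [Real.dist_eq, Real.dist_eq] at hd
      simp only [add_sub_cancel_left, abs_of_pos h1] at hd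
      rw [hF]
      simp only [norm_mul, Real.norm_eq_abs, abs_of_pos (by positivity : (0:ℝ) < (n:ℝ)+1)]
      calc |g (x + ((n : ℝ) + 1)⁻¹) - g x| * ((n:ℝ)+1)
          ≤ (C * ((n : ℝ) + 1)⁻¹) * ((n:ℝ)+1) := by
            apply mul_le_mul_of_nonneg_right hd (by positivity)
        _ = C := by field_simp
    · have hsub : ∀ᵐ x ∂(volume.restrict (Set.Ioc a b)), x ∈ Set.Ioo a b := by
        rw [← MeasureTheory.Measure.restrict_congr_set Ioo_ae_eq_Ioc]
        exact MeasureTheory.ae_restrict_mem measurableSet_Ioo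
      filter_upwards [hsub, MeasureTheory.ae_restrict_of_ae h] with x hx hd
      exact slope_tendsto_seq' (hd hx).1.hasDerivAt
  have hnn : 0 ≤ ∫ x in Set.Ioc a b, deriv g x := by
    apply MeasureTheory.integral_nonneg_of_ae
    have hsub : ∀ᵐ x ∂(volume.restrict (Set.Ioc a b)), x ∈ Set.Ioo a b := by
      rw [← MeasureTheory.Measure.restrict_congr_set Ioo_ae_eq_Ioc]
      exact MeasureTheory.ae_restrict_mem measurableSet_Ioo
    filter_upwards [hsub, MeasureTheory.ae_restrict_of_ae h] with x hx hd
    exact (hd hx).2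
  have huniq := tendsto_nhds_unique lim1 lim2
  linarith [huniq ▸ hnn]

/-- A Lipschitz curve `γ : I → ℝⁿ` is self-contracted if and only if its reverse
parametrization `γ⁻ : -I → ℝⁿ`, `γ⁻(t) = γ(-t)`, is self-expanded. -/
theorem selfContracted_iff_reverse_selfExpanded {n : ℕ} (I : Set ℝ) (hI : I.OrdConnected)
    (γ : ℝ → EuclideanSpace ℝ (Fin n)) (K : NNReal) (hγ : LipschitzOnWith K γ I) :
    SelfContracted I γ ↔ SelfExpanded (-I) (fun t => γ (-t)) := by
  have hIcc : ∀ u b : ℝ, u ∈ -I → b ∈ -I → Icc u b ⊆ -I := by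
    intro u b hu hb x hx
    rw [Set.mem_neg]
    exact hI.out (Set.mem_neg.mp hb) (Set.mem_neg.mp hu) ⟨by linarith [hx.2], by linarith [hx.1]⟩
  constructor
  · intro hSC
    constructor
    · refine ⟨K, fun x hx y hy => ?_⟩
      have := hγ (Set.mem_neg.mp hx) (Set.mem_neg.mp hy)
      simpa [edist_neg_neg] using this
    · intro t ht hd u hu hut
      rcases eq_or_lt_of_le hut with rfl | hult
      · simp
      · set d := derivWithin (fun s => γ (-s)) (-I) t with hdd
        have hsub : Ioo u t ⊆ -I := fun x hx => hIcc u t hu ht ⟨le_of_lt hx.1, le_of_lt hx.2⟩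
        have hG : HasDerivWithinAt (fun s => ⟪γ (-s) - γ (-u), γ (-s) - γ (-u)⟫)
            (⟪γ (-t) - γ (-u), d⟫ + ⟪d, γ (-t) - γ (-u)⟫) (Ioo u t) t := by
          exact (HasDerivWithinAt.inner ℝ
            ((hd.hasDerivWithinAt.sub_const _))
            ((hd.hasDerivWithinAt.sub_const _))).mono hsub
        have hslope := hasDerivWithinAt_iff_tendsto_slope.mp hG
        have hne : (𝓝[Ioo u t \ {t}] t).NeBot := by
          have : Ioo u t \ {t} = Ioo u t := by
            apply diff_singleton_eq_self
            simp
          rw [this]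
          exact right_nhdsWithin_Ioo_neBot hult
        have hnonneg : 0 ≤ ⟪γ (-t) - γ (-u), d⟫ + ⟪d, γ (-t) - γ (-u)⟫ := by
          refine ge_of_tendsto hslope ?_
          filter_upwards [self_mem_nhdsWithin] with s hs
          rcases hs with ⟨hs1, -⟩
          have hnorm : ‖γ (-s) - γ (-u)‖ ≤ ‖γ (-t) - γ (-u)‖ := by
            apply hSC (-t) (Set.mem_neg.mp ht) (-s) (Set.mem_neg.mp (hsub hs1))
              (-u) (Set.mem_neg.mp hu) (by linarith [hs1.2]) (by linarith [hs1.1])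
          have hle : ⟪γ (-s) - γ (-u), γ (-s) - γ (-u)⟫
              ≤ ⟪γ (-t) - γ (-u), γ (-t) - γ (-u)⟫ := by
            rw [real_inner_self_eq_norm_sq, real_inner_self_eq_norm_sq]
            exact pow_le_pow_left₀ (norm_nonneg _) hnorm 2
          rw [slope_def_field]
          exact div_nonneg_of_nonpos (by linarith) (by linarith [hs1.2])
        have hcomm : ⟪γ (-t) - γ (-u), d⟫ = ⟪d, γ (-t) - γ (-u)⟫ := real_inner_comm _ _
        simp only [hdd] at hnonneg hcomm ⊢
        linarith
  · rintro ⟨-, hder⟩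
    intro t₁ h1 t₂ h2 t₃ h3 h12 h23
    set u : ℝ := -t₃ with hu
    set a : ℝ := -t₂ with ha
    set b : ℝ := -t₁ with hb
    have hu' : u ∈ -I := Set.neg_mem_neg.mpr h3
    have ha' : a ∈ -I := Set.neg_mem_neg.mpr h2
    have hb' : b ∈ -I := Set.neg_mem_neg.mpr h1
    have hua : u ≤ a := by simp [hu, ha]; linarith
    have hab : a ≤ b := by simp [ha, hb]; linarith
    rcases eq_or_lt_of_le hua with h | hua'
    · have : γ t₂ = γ t₃ := by rw [show t₂ = t₃ by simp [hu, ha] at h; linarith]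
      rw [this]
      simpa using norm_nonneg _
    rcases eq_or_lt_of_le hab with h | hab'
    · rw [show t₁ = t₂ by simp [ha, hb] at h; linarith]
    -- now u < a < b
    have hIub : Icc u b ⊆ -I := hIcc u b hu' hb'
    set proj : ℝ → ℝ := fun s => min b (max u s) with hproj
    have hprojmem : ∀ s, proj s ∈ Icc u b := fun s =>
      ⟨le_min (by linarith) (le_max_left _ _), min_le_left _ _⟩
    have hprojeq : ∀ s ∈ Icc u b, proj s = s := fun s hs => by
      rw [hproj]; simp only [max_eq_right hs.1, min_eq_right hs.2]
    have hproj1 : ∀ x y, dist (proj x) (proj y) ≤ dist x y := by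
      intro x y
      rw [Real.dist_eq, Real.dist_eq, hproj]
      calc |min b (max u x) - min b (max u y)| ≤ max |b - b| |max u x - max u y| :=
            abs_min_sub_min_le_max _ _ _ _
        _ ≤ |x - y| := by
            rw [sub_self, abs_zero]
            apply max_le (abs_nonneg _)
            rw [max_comm u x, max_comm u y]
            exact abs_max_sub_max_le_abs _ _ _
    set δt : ℝ → EuclideanSpace ℝ (Fin n) := fun s => γ (-(proj s)) with hδt
    have hLip : LipschitzWith K δt := by
      apply LipschitzWith.of_dist_le_mul
      intro x y
      calc dist (δt x) (δt y) ≤ K * dist (-(proj x)) (-(proj y)) :=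
            hγ.dist_le_mul _ (Set.mem_neg.mp (hIub (hprojmem x)))
              _ (Set.mem_neg.mp (hIub (hprojmem y)))
        _ ≤ K * dist x y := by
            rw [dist_neg_neg]
            exact mul_le_mul_of_nonneg_left (hproj1 x y) (NNReal.coe_nonneg K)
    have hD : ∀ s, ‖δt s - δt u‖ ≤ K * (b - u) := by
      intro s
      rw [← dist_eq_norm]
      calc dist (δt s) (δt u) ≤ K * dist (-(proj s)) (-(proj u)) :=
            hγ.dist_le_mul _ (Set.mem_neg.mp (hIub (hprojmem s)))
              _ (Set.mem_neg.mp (hIub (hprojmem u)))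
        _ = K * dist (proj s) (proj u) := by rw [dist_neg_neg]
        _ ≤ K * (b - u) := by
            apply mul_le_mul_of_nonneg_left _ (NNReal.coe_nonneg K)
            exact Real.dist_le_of_mem_Icc (hprojmem s) (hprojmem u)
    set G : ℝ → ℝ := fun s => ⟪δt s - δt u, δt s - δt u⟫ with hG
    have hGnorm : ∀ s, G s = ‖δt s - δt u‖ ^ 2 := fun s => real_inner_self_eq_norm_sq _
    have hLipG : LipschitzWith (2 * (K * (b - u)) * K).toNNReal G := by
      apply LipschitzWith.of_dist_le_mul
      intro x y
      have hbu : (0:ℝ) ≤ (K:ℝ) * (b - u) := mul_nonneg K.coe_nonneg (by linarith)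
      rw [Real.dist_eq, hGnorm, hGnorm]
      have h1 : |‖δt x - δt u‖ - ‖δt y - δt u‖| ≤ ‖δt x - δt y‖ := by
        have := abs_norm_sub_norm_le (δt x - δt u) (δt y - δt u)
        simpa using this
      have h2 : ‖δt x - δt y‖ ≤ K * dist x y := by
        rw [← dist_eq_norm]; exact hLip.dist_le_mul x y
      have h3 : ‖δt x - δt u‖ ^ 2 - ‖δt y - δt u‖ ^ 2
          = (‖δt x - δt u‖ + ‖δt y - δt u‖) * (‖δt x - δt u‖ - ‖δt y - δt u‖) := by ring
      rw [h3, abs_mul]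
      have h4 : |‖δt x - δt u‖ + ‖δt y - δt u‖| ≤ 2 * (K * (b - u)) := by
        rw [abs_of_nonneg (by positivity)]
        linarith [hD x, hD y]
      rw [Real.coe_toNNReal _ (mul_nonneg (by linarith) K.coe_nonneg : (0:ℝ) ≤ 2 * ((K:ℝ) * (b-u)) * K)]
      calc |‖δt x - δt u‖ + ‖δt y - δt u‖| * |‖δt x - δt u‖ - ‖δt y - δt u‖|
          ≤ (2 * (K * (b - u))) * (K * dist x y) := by
            apply mul_le_mul h4 (h1.trans h2) (abs_nonneg _) (by linarith)
        _ = 2 * (K * (b - u)) * K * dist x y := by ring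
    have hae : ∀ᵐ x ∂(volume : Measure ℝ), x ∈ Set.Ioo a b →
        DifferentiableAt ℝ G x ∧ 0 ≤ deriv G x := by
      filter_upwards [hLip.ae_differentiableAt (μ := volume)] with x hdiff hx
      have hxub : x ∈ Ioo u b := ⟨lt_trans hua' hx.1, hx.2⟩
      have hnhds : Ioo u b ∈ 𝓝 x := isOpen_Ioo.mem_nhds hxub
      have hcong : (fun s => γ (-s)) =ᶠ[𝓝 x] δt := by
        filter_upwards [hnhds] with s hs
        rw [hδt]
        simp only [hprojeq s ⟨le_of_lt hs.1, le_of_lt hs.2⟩]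
      have hδx : HasDerivAt (fun s => γ (-s)) (deriv δt x) x :=
        hdiff.hasDerivAt.congr_of_eventuallyEq hcong
      have hdW : DifferentiableWithinAt ℝ (fun s => γ (-s)) (-I) x :=
        hδx.differentiableAt.differentiableWithinAt
      have hnI : -I ∈ 𝓝 x := Filter.mem_of_superset hnhds
        (fun s hs => hIub ⟨le_of_lt hs.1, le_of_lt hs.2⟩)
      have hderivW : derivWithin (fun s => γ (-s)) (-I) x = deriv δt x := by
        rw [derivWithin_of_mem_nhds hnI, hδx.deriv]
      have hkey : 0 ≤ ⟪deriv δt x, γ (-x) - γ (-u)⟫ := by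
        have := hder x (hIub ⟨le_of_lt hxub.1, le_of_lt hxub.2⟩) hdW u hu'
          (le_of_lt hxub.1)
        rw [hderivW] at this
        simpa using this
      have hGd : HasDerivAt G (⟪δt x - δt u, deriv δt x⟫ + ⟪deriv δt x, δt x - δt u⟫) x :=
        HasDerivAt.inner ℝ (hdiff.hasDerivAt.sub_const _) (hdiff.hasDerivAt.sub_const _)
      refine ⟨hGd.differentiableAt, ?_⟩
      rw [hGd.deriv]
      have hδtx : δt x = γ (-x) := by
        rw [hδt]; simp only [hprojeq x ⟨le_of_lt hxub.1, le_of_lt hxub.2⟩]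
      have hδtu : δt u = γ (-u) := by
        rw [hδt]; simp only [hprojeq u ⟨le_refl u, by linarith⟩]
      rw [hδtx, hδtu]
      linarith [hkey, real_inner_comm (γ (-x) - γ (-u)) (deriv δt x)]
    have hGab : G a ≤ G b := lipschitz_mono_of_ae_deriv_nonneg' hLipG (le_of_lt hab') hae
    rw [hGnorm, hGnorm] at hGab
    have hnorm : ‖δt a - δt u‖ ≤ ‖δt b - δt u‖ :=
      (pow_le_pow_iff_left₀ (norm_nonneg _) (norm_nonneg _) (by norm_num)).mp hGab
    have hδta : δt a = γ t₂ := by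
      show γ (-(proj a)) = γ t₂
      rw [hprojeq a ⟨le_of_lt hua', le_of_lt hab'⟩, ha, neg_neg]
    have hδtb : δt b = γ t₁ := by
      show γ (-(proj b)) = γ t₁
      rw [hprojeq b ⟨by linarith, le_refl b⟩, hb, neg_neg]
    have hδtu : δt u = γ t₃ := by
      show γ (-(proj u)) = γ t₃
      rw [hprojeq u ⟨le_refl u, by linarith⟩, hu, neg_neg]
    rwa [hδta, hδtb, hδtu] at hnorm
end

section
/- Let Σ be a subset of the unit sphere S^{n−1} ⊆ ℝ^n such that ⟨x, y⟩ ≤ 1/2 for all x, y ∈ Σ with x ≠ y. Then Σ is finite and its cardinality is at most 3^n. -/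
open Set Metric RealInnerProductSpace MeasureTheory

lemma finset_packing_card_le {n : ℕ} (t : Finset (EuclideanSpace ℝ (Fin n)))
    (hnorm : ∀ x ∈ t, ‖x‖ = 1)
    (hdist : ∀ x ∈ t, ∀ y ∈ t, x ≠ y → 1 ≤ dist x y) :
    t.card ≤ 3 ^ n := by
  rcases Nat.eq_zero_or_pos n with rfl | hn
  · have : t = ∅ := by
      rw [Finset.eq_empty_iff_forall_notMem]
      intro x hx
      have h0 : ‖x‖ = 1 := hnorm x hx
      have : x = 0 := Subsingleton.elim x 0
      rw [this] at h0; simp at h0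
    simp [this]
  haveI : Nonempty (Fin n) := ⟨⟨0, hn⟩⟩
  set V := volume (Metric.ball (0 : EuclideanSpace ℝ (Fin n)) 1) with hV
  have hVpos : 0 < V := measure_ball_pos _ _ one_pos
  have hVlt : V < ⊤ := measure_ball_lt_top
  -- balls of radius 1/2 are pairwise disjoint
  have hdisj : (↑t : Set (EuclideanSpace ℝ (Fin n))).PairwiseDisjoint
      (fun x => Metric.ball x (1/2)) := by
    intro x hx y hy hxy
    apply Metric.ball_disjoint_ball
    calc (1/2 : ℝ) + 1/2 = 1 := by norm_num
    _ ≤ dist x y := hdist x hx y hy hxy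
  have hsub : ∀ x ∈ t, Metric.ball x (1/2) ⊆
      Metric.ball (0 : EuclideanSpace ℝ (Fin n)) (3/2) := by
    intro x hx z hz
    simp only [Metric.mem_ball] at hz ⊢
    calc dist z 0 ≤ dist z x + dist x 0 := dist_triangle _ _ _
    _ < 1/2 + 1 := by
        have : dist x 0 = 1 := by simpa [dist_eq_norm] using hnorm x hx
        linarith
    _ ≤ 3/2 := by norm_num
  have hmeas := MeasureTheory.measure_biUnion_finset (μ := volume) hdisj
    (fun x _ => measurableSet_ball)
  have hle : volume (⋃ x ∈ t, Metric.ball x (1/2)) ≤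
      volume (Metric.ball (0 : EuclideanSpace ℝ (Fin n)) (3/2)) :=
    measure_mono (Set.iUnion₂_subset hsub)
  rw [hmeas] at hle
  have hV1 : V = ENNReal.ofReal (Real.sqrt Real.pi ^ n / Real.Gamma (n / 2 + 1)) := by
    rw [hV, EuclideanSpace.volume_ball, Fintype.card_fin]
    simp
  have hballx : ∀ x : EuclideanSpace ℝ (Fin n),
      volume (Metric.ball x (1/2)) = ENNReal.ofReal (1/2) ^ n * V := by
    intro x
    rw [EuclideanSpace.volume_ball, Fintype.card_fin, hV1]
  have hball0 : volume (Metric.ball (0 : EuclideanSpace ℝ (Fin n)) (3/2))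
      = ENNReal.ofReal (3/2) ^ n * V := by
    rw [EuclideanSpace.volume_ball, Fintype.card_fin, hV1]
  rw [hball0] at hle
  simp only [hballx, Finset.sum_const, nsmul_eq_mul] at hle
  rw [← mul_assoc] at hle
  have hcancel : (t.card : ENNReal) * ENNReal.ofReal (1/2) ^ n ≤
      ENNReal.ofReal (3/2) ^ n :=
    (ENNReal.mul_le_mul_iff_left hVpos.ne' hVlt.ne).mp (by simpa [mul_assoc] using hle)
  have h2 : (t.card : ENNReal) * ENNReal.ofReal (1/2) ^ n * ENNReal.ofReal 2 ^ n ≤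
      ENNReal.ofReal (3/2) ^ n * ENNReal.ofReal 2 ^ n :=
    mul_le_mul_left hcancel _
  have key : (t.card : ENNReal) ≤ 3 ^ n := by
    calc (t.card : ENNReal) = (t.card : ENNReal) * (ENNReal.ofReal (1/2) * ENNReal.ofReal 2) ^ n := by
          rw [← ENNReal.ofReal_mul (by norm_num)]; norm_num
    _ = (t.card : ENNReal) * ENNReal.ofReal (1/2) ^ n * ENNReal.ofReal 2 ^ n := by
          rw [mul_pow, mul_assoc]
    _ ≤ ENNReal.ofReal (3/2) ^ n * ENNReal.ofReal 2 ^ n := h2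
    _ = (ENNReal.ofReal (3/2) * ENNReal.ofReal 2) ^ n := (mul_pow _ _ _).symm
    _ = 3 ^ n := by rw [← ENNReal.ofReal_mul (by norm_num)]; norm_num
  exact_mod_cast key

/-- If `Σ` is a subset of the unit sphere `S^{n-1} ⊆ ℝⁿ` such that `⟪x, y⟫ ≤ 1/2` for all
distinct `x, y ∈ Σ`, then `Σ` is finite with cardinality at most `3 ^ n`. -/
theorem sphere_packing_card_le {n : ℕ} (S : Set (EuclideanSpace ℝ (Fin n)))
    (hS : S ⊆ Metric.sphere (0 : EuclideanSpace ℝ (Fin n)) 1)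
    (h : ∀ x ∈ S, ∀ y ∈ S, x ≠ y → ⟪x, y⟫ ≤ 1 / 2) :
    S.Finite ∧ S.ncard ≤ 3 ^ n := by
  have hnorm : ∀ x ∈ S, ‖x‖ = 1 := by
    intro x hx
    have := hS hx
    simpa [dist_eq_norm] using this
  have hdist : ∀ x ∈ S, ∀ y ∈ S, x ≠ y → 1 ≤ dist x y := by
    intro x hx y hy hxy
    have h1 : ‖x - y‖ ^ 2 = ‖x‖ ^ 2 - 2 * ⟪x, y⟫ + ‖y‖ ^ 2 := norm_sub_sq_real x y
    rw [hnorm x hx, hnorm y hy] at h1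
    have h2 : ⟪x, y⟫ ≤ 1/2 := h x hx y hy hxy
    have h3 : (1:ℝ) ≤ ‖x - y‖ ^ 2 := by nlinarith
    rw [dist_eq_norm]
    nlinarith [norm_nonneg (x - y)]
  have hfin : S.Finite := by
    by_contra hinf
    have hinf' : S.Infinite := hinf
    obtain ⟨t, hts, htc⟩ := hinf'.exists_subset_card_eq (3 ^ n + 1)
    have := finset_packing_card_le t (fun x hx => hnorm x (hts hx))
      (fun x hx y hy hxy => hdist x (hts hx) y (hts hy) hxy)
    omega
  refine ⟨hfin, ?_⟩
  rw [Set.ncard_eq_toFinset_card S hfin]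
  exact finset_packing_card_le _
    (fun x hx => hnorm x (hfin.mem_toFinset.mp hx))
    (fun x hx y hy hxy => hdist x (hfin.mem_toFinset.mp hx) y (hfin.mem_toFinset.mp hy) hxy)
end

section
/- Let Σ be a nonempty subset of the unit sphere S^{n−1} ⊆ ℝ^n such that ⟨x, y⟩ ≥ −(1/3)^{n+1} for all x, y ∈ Σ. Then there exists ζ ∈ S^{n−1} such that ⟨ζ, x⟩ ≥ (1/3)^{2n+1} for all x ∈ Σ. -/
open Set Metric RealInnerProductSpace

theorem aux_two_mul_le (m : ℕ) : 2 * m ≤ 3 ^ m := by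
  induction m with
  | zero => simp
  | succ k ih =>
    have h1 : 1 ≤ 3 ^ k := Nat.one_le_pow _ _ (by norm_num)
    rw [pow_succ]
    nlinarith


/-- Hemisphere lemma: if `Σ` is a nonempty subset of the unit sphere `S^{n-1} ⊆ ℝⁿ` with
`⟪x, y⟫ ≥ -(1/3)^(n+1)` for all `x, y ∈ Σ`, then there is a unit vector `ζ` with
`⟪ζ, x⟫ ≥ (1/3)^(2n+1)` for all `x ∈ Σ`. -/
theorem hemisphere_lemma {n : ℕ} (S : Set (EuclideanSpace ℝ (Fin n)))
    (hne : S.Nonempty)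
    (hS : S ⊆ Metric.sphere (0 : EuclideanSpace ℝ (Fin n)) 1)
    (h : ∀ x ∈ S, ∀ y ∈ S, -((1 / 3 : ℝ) ^ (n + 1)) ≤ ⟪x, y⟫) :
    ∃ ζ ∈ Metric.sphere (0 : EuclideanSpace ℝ (Fin n)) 1,
      ∀ x ∈ S, (1 / 3 : ℝ) ^ (2 * n + 1) ≤ ⟪ζ, x⟫ := by
  set ε : ℝ := (1 / 3 : ℝ) ^ (n + 1) with hεdef
  have hε_pos : 0 < ε := by positivity
  have hεle : ε ≤ 1 / (2 * (n + 1)) := by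
    rw [hεdef, le_div_iff₀ (by positivity)]
    have := aux_two_mul_le (n + 1)
    have h2 : (2 * ((n:ℝ) + 1)) ≤ 3 ^ (n + 1) := by exact_mod_cast this
    calc (1/3 : ℝ) ^ (n+1) * (2 * (n+1)) ≤ (1/3 : ℝ)^(n+1) * 3^(n+1) := by
          apply mul_le_mul_of_nonneg_left h2 (by positivity)
      _ = 1 := by rw [← mul_pow]; norm_num
  -- key bound on the convex hull
  have key : ∀ p ∈ convexHull ℝ S, 1 / (2 * (n + 1) : ℝ) ≤ ‖p‖ ^ 2 := by
    intro p hp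
    rw [convexHull_eq_union] at hp
    simp only [Set.mem_iUnion] at hp
    obtain ⟨t, hts, hai, hpt⟩ := hp
    rw [Finset.convexHull_eq] at hpt
    obtain ⟨w, hw0, hw1, hwc⟩ := hpt
    have hcard : (t.card : ℝ) ≤ n + 1 := by
      have h1 := hai.card_le_finrank_succ
      have h2 : Module.finrank ℝ ↥(vectorSpan ℝ (Set.range (Subtype.val : ↥t → _))) ≤ n := by
        simpa [finrank_euclideanSpace_fin] using
          (Submodule.finrank_le (vectorSpan ℝ (Set.range (Subtype.val : ↥t → _))))
      rw [Fintype.card_coe] at h1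
      have : t.card ≤ n + 1 := by omega
      exact_mod_cast this
    have htne : 0 < t.card := by
      rcases Finset.eq_empty_or_nonempty t with rfl | ht
      · simp at hw1
      · exact Finset.card_pos.mpr ht
    have hp_eq : p = ∑ y ∈ t, w y • y := by
      rw [← hwc, Finset.centerMass_eq_of_sum_1 _ _ hw1]
      simp
    have hinner : ⟪p, p⟫ = ∑ y ∈ t, ∑ z ∈ t, w y * w z * ⟪y, z⟫ := by
      rw [hp_eq, sum_inner]
      refine Finset.sum_congr rfl fun y hy => ?_
      rw [inner_sum]
      refine Finset.sum_congr rfl fun z hz => ?_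
      rw [real_inner_smul_left, real_inner_smul_right]; ring
    set g : EuclideanSpace ℝ (Fin n) → EuclideanSpace ℝ (Fin n) → ℝ :=
      fun y z => w y * w z * (⟪y, z⟫ + ε) with hgdef
    have hg_nonneg : ∀ y ∈ t, ∀ z ∈ t, 0 ≤ g y z := by
      intro y hy z hz
      have := h y (hts hy) z (hts hz)
      have hwy := hw0 y hy
      have hwz := hw0 z hz
      have : 0 ≤ ⟪y, z⟫ + ε := by linarith
      positivity
    have hdiag : ∀ y ∈ t, g y y = (1 + ε) * w y ^ 2 := by
      intro y hy
      have hy1 : ‖y‖ = 1 := by simpa using hS (hts hy)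
      have : ⟪y, y⟫ = 1 := by
        rw [real_inner_self_eq_norm_sq, hy1]; norm_num
      rw [hgdef]; simp only [this]; ring
    have hsum_ge : ∑ y ∈ t, ∑ z ∈ t, g y z ≥ ∑ y ∈ t, g y y := by
      apply Finset.sum_le_sum
      intro y hy
      exact Finset.single_le_sum (fun z hz => hg_nonneg y hy z hz) hy
    have hgsum : ∑ y ∈ t, ∑ z ∈ t, g y z = ⟪p, p⟫ + ε := by
      rw [hinner]
      have : ∀ y ∈ t, ∑ z ∈ t, g y z
          = (∑ z ∈ t, w y * w z * ⟪y, z⟫) + w y * ε := by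
        intro y hy
        have he : ∀ z ∈ t, g y z = w y * w z * ⟪y, z⟫ + (ε * w y) * w z := by
          intro z hz; rw [hgdef]; ring
        rw [Finset.sum_congr rfl he, Finset.sum_add_distrib, ← Finset.mul_sum, hw1]
        ring
      rw [Finset.sum_congr rfl this, Finset.sum_add_distrib, ← Finset.sum_mul, hw1]
      ring
    have hsq : 1 / (t.card : ℝ) ≤ ∑ y ∈ t, w y ^ 2 := by
      have hcs : (∑ y ∈ t, w y) ^ 2 ≤ (t.card : ℝ) * ∑ y ∈ t, w y ^ 2 :=
        sq_sum_le_card_mul_sum_sq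
      rw [hw1] at hcs
      rw [div_le_iff₀ (by exact_mod_cast htne)]
      nlinarith [hcs]
    have hsq' : 1 / (n + 1 : ℝ) ≤ ∑ y ∈ t, w y ^ 2 := by
      refine le_trans ?_ hsq
      apply one_div_le_one_div_of_le (by exact_mod_cast htne) hcard
    have hdiagsum : ∑ y ∈ t, g y y = (1 + ε) * ∑ y ∈ t, w y ^ 2 := by
      rw [Finset.sum_congr rfl hdiag, ← Finset.mul_sum]
    have hpp : ⟪p, p⟫ + ε ≥ (1 + ε) * (1 / (n + 1 : ℝ)) := by
      rw [← hgsum]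
      calc ∑ y ∈ t, ∑ z ∈ t, g y z ≥ ∑ y ∈ t, g y y := hsum_ge
        _ = (1 + ε) * ∑ y ∈ t, w y ^ 2 := hdiagsum
        _ ≥ (1 + ε) * (1 / (n + 1 : ℝ)) := by
            apply mul_le_mul_of_nonneg_left hsq' (by positivity)
    have hnorm : ⟪p, p⟫ = ‖p‖ ^ 2 := real_inner_self_eq_norm_sq p
    rw [← hnorm]
    have hn1 : (0 : ℝ) < n + 1 := by positivity
    have hterm : ε * (1 / ((n:ℝ)+1)) ≥ 0 := by positivity
    have hexp : (1 + ε) * (1 / ((n:ℝ) + 1)) = 1 / ((n:ℝ)+1) + ε * (1 / ((n:ℝ)+1)) := by ring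
    have hAB : (1:ℝ)/((n:ℝ)+1) = 2 * (1/(2*((n:ℝ)+1))) := by field_simp
    linarith
  -- the closed convex hull
  set K : Set (EuclideanSpace ℝ (Fin n)) := closure (convexHull ℝ S) with hKdef
  have hKconv : Convex ℝ K := (convex_convexHull ℝ S).closure
  have hKne : K.Nonempty :=
    hne.mono ((subset_convexHull ℝ S).trans subset_closure)
  have hKcomplete : IsComplete K := isClosed_closure.isComplete
  obtain ⟨v, hvK, hvmin⟩ :=
    exists_norm_eq_iInf_of_complete_convex hKne hKcomplete hKconv 0
  have hvproj : ∀ w ∈ K, ⟪(0 : EuclideanSpace ℝ (Fin n)) - v, w - v⟫ ≤ 0 :=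
    (norm_eq_iInf_iff_real_inner_le_zero hKconv hvK).mp hvmin
  have hKbound : K ⊆ {x | 1 / (2 * (n + 1) : ℝ) ≤ ‖x‖ ^ 2} := by
    rw [hKdef]
    apply closure_minimal key
    exact isClosed_le continuous_const (continuous_norm.pow 2)
  have hvbound : 1 / (2 * (n + 1) : ℝ) ≤ ‖v‖ ^ 2 := hKbound hvK
  have hvpos : 0 < ‖v‖ := by
    nlinarith [norm_nonneg v]
  refine ⟨‖v‖⁻¹ • v, ?_, ?_⟩
  · rw [mem_sphere_zero_iff_norm, norm_smul, norm_inv, norm_norm]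
    field_simp
  · intro x hx
    have hxK : x ∈ K := subset_closure (subset_convexHull ℝ S hx)
    have hvx : ‖v‖ ^ 2 ≤ ⟪v, x⟫ := by
      have := hvproj x hxK
      rw [inner_sub_left, inner_sub_right, inner_sub_right] at this
      simp only [inner_zero_left] at this
      have hvv : ⟪v, v⟫ = ‖v‖ ^ 2 := real_inner_self_eq_norm_sq v
      linarith
    have hζx : ⟪‖v‖⁻¹ • v, x⟫ = ‖v‖⁻¹ * ⟪v, x⟫ := real_inner_smul_left v x ‖v‖⁻¹
    rw [hζx]
    have hv_ge : (1 / 3 : ℝ) ^ (2 * n + 1) ≤ ‖v‖ := by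
      have hsq2 : ((1 / 3 : ℝ) ^ (2 * n + 1)) ^ 2 ≤ 1 / (2 * (n + 1) : ℝ) := by
        have h1 : ((1 / 3 : ℝ) ^ (2 * n + 1)) ^ 2 = (1 / 3 : ℝ) ^ (2 * (2 * n + 1)) := by
          rw [← pow_mul]; ring_nf
        have h2 : (1 / 3 : ℝ) ^ (2 * (2 * n + 1)) ≤ (1 / 3 : ℝ) ^ (n + 1) :=
          pow_le_pow_of_le_one (by norm_num) (by norm_num) (by omega)
        rw [h1]
        exact h2.trans hεle
      nlinarith [pow_nonneg (by norm_num : (0:ℝ) ≤ 1/3) (2*n+1), norm_nonneg v]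
    calc (1 / 3 : ℝ) ^ (2 * n + 1) ≤ ‖v‖ := hv_ge
      _ = ‖v‖⁻¹ * ‖v‖ ^ 2 := by field_simp
      _ ≤ ‖v‖⁻¹ * ⟪v, x⟫ := by
          apply mul_le_mul_of_nonneg_left hvx (by positivity)
end

section
/- Let γ : [0, T∞) → ℝ^n (T∞ ∈ (0, ∞]) be a self-contracted curve with bounded image. Then γ(t) converges to some point γ_∞ ∈ ℝ^n as t → T∞. -/
open Set Metric

/-- A bounded self-contracted curve `γ : [0, T∞) → ℝⁿ` (with `T∞ ∈ (0, ∞]`) converges to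
some point `γ∞ ∈ ℝⁿ` as `t → T∞`. -/
theorem selfContracted_converges {n : ℕ} (T : ENNReal) (hT : 0 < T) (I : Set ℝ)
    (hI : I = {t : ℝ | 0 ≤ t ∧ ENNReal.ofReal t < T})
    (γ : ℝ → EuclideanSpace ℝ (Fin n)) (hγ : SelfContracted I γ)
    (hbd : Bornology.IsBounded (γ '' I)) :
    ∃ p : EuclideanSpace ℝ (Fin n),
      ∀ ε > (0 : ℝ), ∃ t₀ ∈ I, ∀ t ∈ I, t₀ ≤ t → ‖γ t - p‖ < ε := by
  -- a sequence in `I` that is eventually above any element of `I`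
  obtain ⟨u, hu_mem, hu_cof⟩ :
      ∃ u : ℕ → ℝ, (∀ k, u k ∈ I) ∧ (∀ t ∈ I, ∃ K, ∀ j, K ≤ j → t ≤ u j) := by
    rcases eq_or_ne T ⊤ with rfl | hne
    · refine ⟨fun k => (k : ℝ), fun k => ?_, fun t ht => ?_⟩
      · simp [hI]
      · exact ⟨⌈t⌉₊, fun j hj => (Nat.le_ceil t).trans (Nat.cast_le.mpr hj)⟩
    · set Tr := T.toReal with hTr
      have hTrpos : 0 < Tr := ENNReal.toReal_pos hT.ne' hne
      have hTeq : T = ENNReal.ofReal Tr := (ENNReal.ofReal_toReal hne).symm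
      refine ⟨fun k => Tr - Tr / (k + 1), fun k => ?_, fun t ht => ?_⟩
      · have h1 : (0:ℝ) < (k : ℝ) + 1 := by positivity
        have hk0 : (0:ℝ) ≤ (k:ℝ) := Nat.cast_nonneg k
        have hle : Tr / ((k:ℝ) + 1) ≤ Tr := div_le_self hTrpos.le (by linarith)
        have hpos : 0 < Tr / ((k:ℝ) + 1) := by positivity
        rw [hI]
        refine ⟨by simpa using sub_nonneg.mpr hle, ?_⟩
        rw [hTeq, ENNReal.ofReal_lt_ofReal_iff hTrpos]
        simpa using hpos
      · have ht' : t < Tr := by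
          rw [hI] at ht
          have := ht.2
          rw [hTeq, ENNReal.ofReal_lt_ofReal_iff hTrpos] at this
          exact this
        obtain ⟨K, hK⟩ := exists_nat_gt (Tr / (Tr - t))
        refine ⟨K, fun j hj => ?_⟩
        have hjt : Tr / (Tr - t) < (j : ℝ) + 1 := by
          have : (K : ℝ) ≤ j := by exact_mod_cast hj
          linarith
        have hpos : 0 < Tr - t := by linarith
        have : Tr / ((j : ℝ) + 1) < Tr - t := by
          rw [div_lt_iff₀ (by positivity)]
          rw [div_lt_iff₀ hpos] at hjt
          linarith [mul_comm (Tr - t) ((j:ℝ)+1)]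
        linarith
  -- compactness: extract a convergent subsequence
  have hcomp : IsCompact (closure (γ '' I)) := hbd.isCompact_closure
  obtain ⟨p, -, φ, hφ, hconv⟩ :=
    hcomp.tendsto_subseq (x := fun k => γ (u k)) (fun k => subset_closure ⟨u k, hu_mem k, rfl⟩)
  set v : ℕ → ℝ := fun k => u (φ k) with hv
  have hv_mem : ∀ k, v k ∈ I := fun k => hu_mem (φ k)
  have hv_cof : ∀ t ∈ I, ∃ K, ∀ j, K ≤ j → t ≤ v j := by
    intro t ht
    obtain ⟨K, hK⟩ := hu_cof t ht
    exact ⟨K, fun j hj => hK (φ j) (hj.trans hφ.le_apply)⟩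
  refine ⟨p, fun ε hε => ?_⟩
  have hε4 : 0 < ε / 4 := by linarith
  obtain ⟨K₀, hK₀⟩ := (Metric.tendsto_atTop.mp hconv) (ε / 4) hε4
  refine ⟨v K₀, hv_mem K₀, fun t ht htt => ?_⟩
  obtain ⟨K₁, hK₁⟩ := hv_cof t ht
  set k := max K₀ K₁
  have h1 : t ≤ v k := hK₁ k (le_max_right _ _)
  have h2 : ‖γ (v k) - p‖ < ε / 4 := by
    have := hK₀ k (le_max_left _ _)
    simpa [dist_eq_norm] using this
  have h3 : ‖γ (v K₀) - p‖ < ε / 4 := by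
    have := hK₀ K₀ le_rfl
    simpa [dist_eq_norm] using this
  have hsc : ‖γ t - γ (v k)‖ ≤ ‖γ (v K₀) - γ (v k)‖ :=
    hγ (v K₀) (hv_mem K₀) t ht (v k) (hv_mem k) htt h1
  have htri : ‖γ (v K₀) - γ (v k)‖ ≤ ‖γ (v K₀) - p‖ + ‖γ (v k) - p‖ := by
    calc ‖γ (v K₀) - γ (v k)‖ = ‖(γ (v K₀) - p) - (γ (v k) - p)‖ := by
          rw [sub_sub_sub_cancel_right]
      _ ≤ ‖γ (v K₀) - p‖ + ‖γ (v k) - p‖ := norm_sub_le _ _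
  have hfin : ‖γ t - p‖ ≤ ‖γ t - γ (v k)‖ + ‖γ (v k) - p‖ := by
    calc ‖γ t - p‖ = ‖(γ t - γ (v k)) + (γ (v k) - p)‖ := by rw [sub_add_sub_cancel]
      _ ≤ _ := norm_add_le _ _
  linarith
end
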